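/- arXiv:2509.07454 — 2 statements merged into one kernel-verified Lean document; each statement's English description precedes it below -/
import Mathlib

section
/- Let B ∈ M_3(ℝ) be a cluster-cyclic exchange matrix. Then for any nonempty reduced sequence w, the set P^w = {(i,j) : i≠j and (ε_i^w b_{ij}^w > 0 or ε_j^w b_{ji}^w > 0)} has exactly four elements. -/
open Matrix

noncomputable section

abbrev Mat3 := Matrix (Fin 3) (Fin 3) ℝ

def pPart {n : ℕ} (A : Matrix (Fin n) (Fin n) ℝ) : Matrix (Fin n) (Fin n) ℝ :=
  Matrix.of fun i j => max (A i j) 0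

def Jmat {n : ℕ} (k : Fin n) : Matrix (Fin n) (Fin n) ℝ :=
  Matrix.diagonal fun i => if i = k then -1 else 1

/-- `A^{•k}`: keep only column `k`. -/
def colSel {n : ℕ} (k : Fin n) (A : Matrix (Fin n) (Fin n) ℝ) : Matrix (Fin n) (Fin n) ℝ :=
  Matrix.of fun i j => if j = k then A i j else 0

/-- `A^{k•}`: keep only row `k`. -/
def rowSel {n : ℕ} (k : Fin n) (A : Matrix (Fin n) (Fin n) ℝ) : Matrix (Fin n) (Fin n) ℝ :=
  Matrix.of fun i j => if i = k then A i j else 0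

/-- Matrix mutation in direction `k`. -/
def mutB {n : ℕ} (k : Fin n) (B : Matrix (Fin n) (Fin n) ℝ) : Matrix (Fin n) (Fin n) ℝ :=
  (Jmat k + colSel k (pPart (-B))) * B * (Jmat k + rowSel k (pPart B))

/-- One step of the simultaneous `(B, C, G)` recursion, mutating at direction `k`. -/
def CGstep {n : ℕ} (B0 : Matrix (Fin n) (Fin n) ℝ)
    (p : Matrix (Fin n) (Fin n) ℝ × Matrix (Fin n) (Fin n) ℝ × Matrix (Fin n) (Fin n) ℝ)
    (k : Fin n) :
    Matrix (Fin n) (Fin n) ℝ × Matrix (Fin n) (Fin n) ℝ × Matrix (Fin n) (Fin n) ℝ :=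
  (mutB k p.1,
   p.2.1 * Jmat k + p.2.1 * rowSel k (pPart p.1) + colSel k (pPart (-p.2.1)) * p.1,
   p.2.2 * Jmat k + p.2.2 * colSel k (pPart (-p.1)) - B0 * colSel k (pPart (-p.2.1)))

def CGmat {n : ℕ} (B : Matrix (Fin n) (Fin n) ℝ) (w : List (Fin n)) :
    Matrix (Fin n) (Fin n) ℝ × Matrix (Fin n) (Fin n) ℝ × Matrix (Fin n) (Fin n) ℝ :=
  w.foldl (CGstep B) (B, 1, 1)

/-- The exchange matrix `B^w`. -/
def Bmat {n : ℕ} (B : Matrix (Fin n) (Fin n) ℝ) (w : List (Fin n)) : Matrix (Fin n) (Fin n) ℝ :=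
  (CGmat B w).1

/-- The `C`-matrix `C^w`. -/
def Cmat {n : ℕ} (B : Matrix (Fin n) (Fin n) ℝ) (w : List (Fin n)) : Matrix (Fin n) (Fin n) ℝ :=
  (CGmat B w).2.1

/-- The `G`-matrix `G^w`. -/
def Gmat {n : ℕ} (B : Matrix (Fin n) (Fin n) ℝ) (w : List (Fin n)) : Matrix (Fin n) (Fin n) ℝ :=
  (CGmat B w).2.2

/-- A sequence is reduced if consecutive entries differ. -/
def ReducedSeq {n : ℕ} (w : List (Fin n)) : Prop := w.Chain' (· ≠ ·)

def SkewSymmetrizable {n : ℕ} (B : Matrix (Fin n) (Fin n) ℝ) : Prop :=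
  ∃ d : Fin n → ℝ, (∀ i, 0 < d i) ∧ (Matrix.diagonal d * B)ᵀ = -(Matrix.diagonal d * B)

def cyclicPattern : Mat3 := !![0,-1,1; 1,0,-1; -1,1,0]

/-- A rank-3 exchange matrix is cyclic if its sign pattern is `± cyclicPattern`. -/
def IsCyclic3 (B : Mat3) : Prop :=
  (∀ i j, Real.sign (B i j) = cyclicPattern i j) ∨
  (∀ i j, Real.sign (B i j) = - cyclicPattern i j)

/-- `B` is cluster-cyclic if every iterated mutation along a reduced sequence is cyclic. -/
def ClusterCyclic (B : Mat3) : Prop :=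
  ∀ w : List (Fin 3), ReducedSeq w → IsCyclic3 (Bmat B w)

/-- `ε` is a family of tropical signs for the (sign-coherent) `C`-pattern of `B`. -/
def IsTropSigns (B : Mat3) (ε : List (Fin 3) → Fin 3 → ℝ) : Prop :=
  ∀ w : List (Fin 3), ReducedSeq w → ∀ i : Fin 3,
    (ε w i = 1 ∨ ε w i = -1) ∧ ∀ j, 0 ≤ ε w i * Cmat B w j i

section Basic
variable {k : Fin 3} (A M : Mat3)

lemma colSel_mul (k : Fin 3) (i j : Fin 3) : (colSel k A * M) i j = A i k * M k j := by
  simp [Matrix.mul_apply, colSel, ite_mul, zero_mul]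

lemma mul_rowSel (k : Fin 3) (i j : Fin 3) : (M * rowSel k A) i j = M i k * A k j := by
  simp [Matrix.mul_apply, rowSel, mul_ite, mul_zero]

lemma mul_colSel (k : Fin 3) (i j : Fin 3) :
    (M * colSel k A) i j = if j = k then (M * A) i j else 0 := by
  simp only [Matrix.mul_apply, colSel, Matrix.of_apply, mul_ite, mul_zero]
  split <;> simp

lemma Jmat_mul (k : Fin 3) (i j : Fin 3) :
    (Jmat k * M) i j = (if i = k then (-1:ℝ) else 1) * M i j := by
  simp [Jmat, Matrix.diagonal_mul]

lemma mul_Jmat (k : Fin 3) (i j : Fin 3) :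
    (M * Jmat k) i j = M i j * (if j = k then (-1:ℝ) else 1) := by
  simp [Jmat, Matrix.mul_diagonal]

lemma mutB_apply (k : Fin 3) (i j : Fin 3) :
    mutB k A i j =
      ((if i = k then (-1:ℝ) else 1) * A i j + max (-A i k) 0 * A k j) *
        (if j = k then (-1:ℝ) else 1)
      + ((if i = k then (-1:ℝ) else 1) * A i k + max (-A i k) 0 * A k k) * max (A k j) 0 := by
  simp only [mutB, Matrix.add_mul, Matrix.mul_add, Matrix.add_apply,
    Jmat_mul, mul_Jmat, colSel_mul, mul_rowSel, pPart, Matrix.neg_apply, Matrix.of_apply]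
  ring

end Basic
section Steps
variable (B : Mat3)

lemma CGmat_append (w : List (Fin 3)) (k : Fin 3) :
    CGmat B (w ++ [k]) = CGstep B (CGmat B w) k := by
  simp [CGmat, List.foldl_append]

lemma Bmat_nil : Bmat B [] = B := rfl
lemma Cmat_nil : Cmat B [] = 1 := rfl

lemma Bmat_append (w : List (Fin 3)) (k : Fin 3) :
    Bmat B (w ++ [k]) = mutB k (Bmat B w) := by
  simp [Bmat, CGmat_append, CGstep]

lemma Cmat_append_apply (w : List (Fin 3)) (k : Fin 3) (i j : Fin 3) :
    Cmat B (w ++ [k]) i j = Cmat B w i j * (if j = k then (-1:ℝ) else 1)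
      + Cmat B w i k * max (Bmat B w k j) 0
      + max (-(Cmat B w i k)) 0 * Bmat B w k j := by
  show (CGmat B (w ++ [k])).2.1 i j = _
  rw [CGmat_append]
  show (Cmat B w * Jmat k + Cmat B w * rowSel k (pPart (Bmat B w))
      + colSel k (pPart (-(Cmat B w))) * Bmat B w) i j = _
  simp [Matrix.add_apply, mul_Jmat, mul_rowSel, colSel_mul, pPart]

end Steps

section Sign

lemma pos_of_sign_one {r : ℝ} (h : Real.sign r = 1) : 0 < r := by
  rcases lt_trichotomy r 0 with h' | h' | h'
  · rw [Real.sign_of_neg h'] at h; norm_num at h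
  · rw [h', Real.sign_zero] at h; norm_num at h
  · exact h'

lemma neg_of_sign_neg_one {r : ℝ} (h : Real.sign r = -1) : r < 0 := by
  rcases lt_trichotomy r 0 with h' | h' | h'
  · exact h'
  · rw [h', Real.sign_zero] at h; norm_num at h
  · rw [Real.sign_of_pos h'] at h; norm_num at h

def cpz : Fin 3 → Fin 3 → ℤ := ![![0,-1,1], ![1,0,-1], ![-1,1,0]]

lemma cp_eq_cpz (i j : Fin 3) : cyclicPattern i j = (cpz i j : ℝ) := by
  fin_cases i <;> fin_cases j <;> norm_num [cyclicPattern, cpz]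

lemma cyc_sign {A : Mat3} (h : IsCyclic3 A) :
    ∃ g : Fin 3 → Fin 3 → ℝ, (∀ i j, Real.sign (A i j) = g i j) ∧ (∀ i, g i i = 0) ∧
      (∀ i j, i ≠ j → g i j = 1 ∨ g i j = -1) ∧ (∀ i j, g j i = - g i j) ∧
      (∀ i j k : Fin 3, i ≠ j → j ≠ k → i ≠ k → g i j = g j k) := by
  have z0 : ∀ i : Fin 3, cpz i i = 0 := by decide
  have z1 : ∀ i j : Fin 3, i ≠ j → cpz i j = 1 ∨ cpz i j = -1 := by decide
  have z2 : ∀ i j : Fin 3, cpz j i = - cpz i j := by decide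
  have z3 : ∀ i j k : Fin 3, i ≠ j → j ≠ k → i ≠ k → cpz i j = cpz j k := by decide
  have e0 : ∀ i : Fin 3, cyclicPattern i i = 0 := by
    intro i; rw [cp_eq_cpz, z0]; norm_num
  have e1 : ∀ i j : Fin 3, i ≠ j → cyclicPattern i j = 1 ∨ cyclicPattern i j = -1 := by
    intro i j hij; rcases z1 i j hij with h' | h' <;> rw [cp_eq_cpz, h'] <;> norm_num
  have e2 : ∀ i j : Fin 3, cyclicPattern j i = - cyclicPattern i j := by
    intro i j; rw [cp_eq_cpz, cp_eq_cpz, z2]; norm_num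
  have e3 : ∀ i j k : Fin 3, i ≠ j → j ≠ k → i ≠ k → cyclicPattern i j = cyclicPattern j k := by
    intro i j k hij hjk hik; rw [cp_eq_cpz, cp_eq_cpz, z3 i j k hij hjk hik]
  rcases h with h | h
  · exact ⟨fun i j => cyclicPattern i j, h, e0, e1, e2, e3⟩
  · refine ⟨fun i j => -cyclicPattern i j, h, ?_, ?_, ?_, ?_⟩
    · intro i; show -cyclicPattern i i = 0; rw [e0]; ring
    · intro i j hij
      rcases e1 i j hij with h' | h' <;> [right; left] <;>
        show -cyclicPattern i j = _ <;> rw [h'] <;> norm_num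
    · intro i j; show -cyclicPattern j i = -(-cyclicPattern i j); rw [e2]
    · intro i j k h1 h2 h3
      show -cyclicPattern i j = -cyclicPattern j k; rw [e3 i j k h1 h2 h3]

end Sign
section CycFacts

/-- The bundle of inequality facts valid for any cyclic `3×3` matrix. -/
lemma cyc_facts {A : Mat3} (h : IsCyclic3 A) :
    (∀ i, A i i = 0) ∧ (∀ i j, i ≠ j → A i j ≠ 0) ∧
      (∀ i j, i ≠ j → A i j * A j i < 0) ∧
      (∀ i j k : Fin 3, i ≠ j → j ≠ k → i ≠ k → 0 < A i j * A j k) := by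
  obtain ⟨g, hg, g0, g1, g2, g3⟩ := cyc_sign h
  have hpos : ∀ i j, g i j = 1 → 0 < A i j := fun i j e => pos_of_sign_one (by rw [hg, e])
  have hneg : ∀ i j, g i j = -1 → A i j < 0 := fun i j e => neg_of_sign_neg_one (by rw [hg, e])
  refine ⟨fun i => ?_, fun i j hij => ?_, fun i j hij => ?_, fun i j k hij hjk hik => ?_⟩
  · have := hg i i; rw [g0] at this; exact Real.sign_eq_zero_iff.mp this
  · rcases g1 i j hij with e | e
    · exact (hpos i j e).ne'
    · exact (hneg i j e).ne
  · rcases g1 i j hij with e | e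
    · have e' : g j i = -1 := by rw [g2, e]
      exact mul_neg_of_pos_of_neg (hpos i j e) (hneg j i e')
    · have e' : g j i = 1 := by rw [g2, e]; ring
      have := mul_neg_of_neg_of_pos (hneg i j e) (hpos j i e')
      exact this
  · have e3 := g3 i j k hij hjk hik
    rcases g1 i j hij with e | e
    · exact mul_pos (hpos i j e) (hpos j k (by rw [← e3, e]))
    · exact mul_pos_of_neg_of_neg (hneg i j e) (hneg j k (by rw [← e3, e]))

end CycFacts

section Recurrence

/-- No everywhere-positive solution of `u (n+2) = γ n * u (n+1) - u n` exists when the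
coefficients are bounded above by some `g < 2`. -/
lemma no_pos_recurrence (γ : ℕ → ℝ) (g : ℝ) (hg : g < 2) (hγ : ∀ n, γ n ≤ g)
    (u : ℕ → ℝ) (hu : ∀ n, 0 < u n) (hrec : ∀ n, u (n + 2) = γ n * u (n + 1) - u n) :
    False := by
  have key : ∀ n, u (n + 2) - u (n + 1) ≤ (u (n + 1) - u n) - (2 - g) * u (n + 1) := by
    intro n
    have := hrec n
    have h1 : γ n * u (n+1) ≤ g * u (n+1) := mul_le_mul_of_nonneg_right (hγ n) (hu _).le
    nlinarith [hu (n+1)]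
  -- differences are strictly decreasing
  have dec : ∀ n, u (n + 2) - u (n + 1) < u (n + 1) - u n := by
    intro n
    have := key n
    nlinarith [hu (n+1)]
  -- phase 1 : some difference is negative
  have phase1 : ∃ N, u (N + 1) - u N < 0 := by
    by_contra hcon
    push_neg at hcon
    have mono : ∀ n, u 0 ≤ u n := by
      intro n
      induction n with
      | zero => exact le_rfl
      | succ m ih => linarith [hcon m]
    have bound : ∀ n, u (n + 1) - u n ≤ (u 1 - u 0) - n * ((2 - g) * u 0) := by
      intro n
      induction n with
      | zero => simp
      | succ m ih =>
        have h2 := key (m)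
        have h3 : (2 - g) * u 0 ≤ (2 - g) * u (m + 1) :=
          mul_le_mul_of_nonneg_left (mono (m+1)) (by linarith)
        push_cast
        push_cast at ih
        nlinarith
    obtain ⟨n, hn⟩ := exists_nat_gt ((u 1 - u 0) / ((2 - g) * u 0))
    have hpos : 0 < (2 - g) * u 0 := mul_pos (by linarith) (hu 0)
    have := bound n
    have := hcon n
    rw [div_lt_iff₀ hpos] at hn
    nlinarith
  obtain ⟨N, hN⟩ := phase1
  have ddec : ∀ b a, a ≤ b → u (b + 1) - u b ≤ u (a + 1) - u a := by
    intro b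
    induction b with
    | zero => intro a ha; rw [Nat.le_zero.mp ha]
    | succ m ih =>
      intro a ha
      rcases Nat.eq_or_lt_of_le ha with rfl | h
      · exact le_rfl
      · have h2 := ih a (Nat.lt_succ_iff.mp h)
        have h3 := dec m
        show u (m + 2) - u (m + 1) ≤ _
        linarith
  -- phase 2 : u goes below zero
  have step : ∀ k : ℕ, u (N + 1 + k) ≤ u (N + 1) + k * (u (N + 1) - u N) := by
    intro k
    induction k with
    | zero => simp
    | succ m ih =>
      have h4 : u (N + 1 + m + 1) - u (N + 1 + m) ≤ u (N + 1) - u N :=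
        ddec (N + 1 + m) N (by omega)
      show u (N + 1 + m + 1) ≤ _
      push_cast
      push_cast at ih
      nlinarith
  obtain ⟨k, hk⟩ := exists_nat_gt (u (N + 1) / (-(u (N + 1) - u N)))
  have hpos2 : 0 < -(u (N + 1) - u N) := by linarith
  rw [div_lt_iff₀ hpos2] at hk
  have := step k
  have := hu (N + 1 + k)
  nlinarith

end Recurrence
section MutFacts
variable {A : Mat3} {k : Fin 3}

lemma mutB_apply_k_row (hkk : A k k = 0) (j : Fin 3) (hjk : j ≠ k) :
    mutB k A k j = - A k j := by
  rw [mutB_apply, if_pos rfl, if_neg hjk, hkk]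
  simp

lemma mutB_apply_k_col (hkk : A k k = 0) (i : Fin 3) (hik : i ≠ k) :
    mutB k A i k = - A i k := by
  rw [mutB_apply, if_pos rfl, if_neg hik, hkk]
  simp

lemma mutB_apply_kk (hkk : A k k = 0) : mutB k A k k = 0 := by
  rw [mutB_apply]
  simp [hkk]

lemma mutB_apply_opp (hkk : A k k = 0) {i j : Fin 3} (hik : i ≠ k) (hjk : j ≠ k) :
    mutB k A i j = A i j + max (-A i k) 0 * A k j + A i k * max (A k j) 0 := by
  rw [mutB_apply, if_neg hik, if_neg hjk, hkk]
  ring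

/-- The key mutation identity for absolute values of the "opposite" entry. -/
lemma mutB_abs (hA : IsCyclic3 A) (hA' : IsCyclic3 (mutB k A)) {i j : Fin 3}
    (hij : i ≠ j) (hjk : j ≠ k) (hik : i ≠ k) :
    |mutB k A i j| = |A i k| * |A k j| - |A i j| := by
  obtain ⟨hd, hnz, hskew, hchain⟩ := cyc_facts hA
  obtain ⟨hd', hnz', hskew', hchain'⟩ := cyc_facts hA'
  have hopp := mutB_apply_opp (hd k) hik hjk
  -- sign(A i j) = - sign(A i k), sign (A i k) = sign (A k j)
  have h1 : 0 < A i k * A k j := hchain i k j hik (Ne.symm hjk) hij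
  have h2 : 0 < A i j * A j k := hchain i j k hij hjk hik
  have h3 : A j k * A k j < 0 := hskew j k hjk
  -- sign of the mutated entry is opposite to sign of A i j :
  have h4 : 0 < mutB k A i j * mutB k A j k := hchain' i j k hij hjk hik
  have h5 : mutB k A j k = - A j k := mutB_apply_k_col (hd k) j hjk
  rw [h5] at h4
  rcases lt_trichotomy (A i k) 0 with hc | hc | hc
  · -- A i k < 0, A k j < 0, A i j > 0, mutated entry < 0
    have hkj : A k j < 0 := by nlinarith
    have hij' : 0 < A i j := by nlinarith
    have habs : mutB k A i j = A i j + (-A i k) * A k j := by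
      rw [hopp, max_eq_left (by linarith), max_eq_right (by linarith)]
      ring
    have hneg : mutB k A i j < 0 := by nlinarith
    rw [abs_of_neg hneg, abs_of_neg hc, abs_of_neg hkj, abs_of_pos hij', habs]
    ring
  · exact absurd hc (hnz i k hik)
  · -- A i k > 0, A k j > 0, A i j < 0, mutated entry > 0
    have hkj : 0 < A k j := by nlinarith
    have hij' : A i j < 0 := by nlinarith
    have habs : mutB k A i j = A i j + A i k * A k j := by
      rw [hopp, max_eq_right (by linarith), max_eq_left (by linarith)]
      ring
    have hpos : 0 < mutB k A i j := by nlinarith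
    rw [abs_of_pos hpos, abs_of_pos hc, abs_of_pos hkj, abs_of_neg hij', habs]
    ring

end MutFacts
section ProdFour

/-- Alternating sequence of mutations at `p` and `q`, starting with `p`. -/
def altSeq (p q : Fin 3) : ℕ → List (Fin 3)
  | 0 => []
  | n + 1 => altSeq p q n ++ [if Even n then p else q]

lemma abs_prod_ge_four (B : Mat3) (hB : ClusterCyclic B) (w : List (Fin 3))
    (hw : ReducedSeq w) {x y : Fin 3} (hxy : x ≠ y) :
    4 ≤ |Bmat B w x y| * |Bmat B w y x| := by
  by_contra h4
  push_neg at h4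
  -- choose the starting letter different from the last letter of `w`
  obtain ⟨p, q, hpq, hlast, hsym⟩ :
      ∃ p q : Fin 3, p ≠ q ∧ (∀ a ∈ w.getLast?, a ≠ p) ∧
        |Bmat B w p q| * |Bmat B w q p| < 4 := by
    by_cases hc : w.getLast? = some x
    · refine ⟨y, x, hxy.symm, ?_, by rw [mul_comm]; exact h4⟩
      intro a ha
      rw [hc, Option.mem_some_iff] at ha
      rw [← ha]
      exact hxy
    · refine ⟨x, y, hxy, ?_, h4⟩
      intro a ha h
      exact hc (by rwa [h] at ha)
  have hthird : ∀ p q : Fin 3, p ≠ q → ∃ r, r ≠ p ∧ r ≠ q := by decide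
  obtain ⟨r, hrp, hrq⟩ := hthird p q hpq
  set ℓ : ℕ → Fin 3 := fun n => if Even n then p else q with hℓ
  set W : ℕ → List (Fin 3) := fun n => w ++ altSeq p q n with hW
  have hWsucc : ∀ n, W (n + 1) = W n ++ [ℓ n] := by
    intro n; simp [hW, altSeq, hℓ]
  have hWlast : ∀ n, (W (n + 1)).getLast? = some (ℓ n) := by
    intro n; rw [hWsucc]; exact List.getLast?_concat
  have hℓne : ∀ n, ℓ n ≠ ℓ (n + 1) := by
    intro n
    simp only [hℓ, Nat.even_add_one]
    by_cases h : Even n <;> simp [h, hpq, hpq.symm]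
  have hred : ∀ n, ReducedSeq (W n) := by
    intro n
    induction n with
    | zero => simpa [hW, altSeq] using hw
    | succ m ih =>
      rw [hWsucc]
      apply List.IsChain.append ih (List.isChain_singleton _)
      intro a ha b hb
      rw [List.head?_cons, Option.mem_some_iff] at hb
      subst hb
      cases m with
      | zero => exact hlast a (by simpa [hW, altSeq] using ha)
      | succ l =>
        rw [hWlast l, Option.mem_some_iff] at ha
        subst ha
        exact hℓne l
  set A : ℕ → Mat3 := fun n => Bmat B (W n) with hA
  have hstep : ∀ n, A (n + 1) = mutB (ℓ n) (A n) := by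
    intro n; rw [hA]; simp only [hWsucc]; exact Bmat_append B (W n) (ℓ n)
  have hcyc : ∀ n, IsCyclic3 (A n) := fun n => hB (W n) (hred n)
  have hdiag : ∀ n k, A n k k = 0 := fun n => (cyc_facts (hcyc n)).1
  -- the entries between p and q keep their absolute values
  have hconst : ∀ n, |A n p q| = |A 0 p q| ∧ |A n q p| = |A 0 q p| := by
    intro n
    induction n with
    | zero => exact ⟨rfl, rfl⟩
    | succ m ih =>
      rw [hstep m]
      by_cases h : Even m
      · have : ℓ m = p := by simp [hℓ, h]
        rw [this, mutB_apply_k_row (hdiag m p) q hpq.symm,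
          mutB_apply_k_col (hdiag m p) q hpq.symm, abs_neg, abs_neg]
        exact ih
      · have : ℓ m = q := by simp [hℓ, h]
        rw [this, mutB_apply_k_col (hdiag m q) p hpq,
          mutB_apply_k_row (hdiag m q) p hpq, abs_neg, abs_neg]
        exact ih
  set c : ℝ := |A 0 p q| with hc
  set c' : ℝ := |A 0 q p| with hc'
  have hcpos : 0 < c := abs_pos.mpr ((cyc_facts (hcyc 0)).2.1 p q hpq)
  have hc'pos : 0 < c' := abs_pos.mpr ((cyc_facts (hcyc 0)).2.1 q p hpq.symm)
  set u : ℕ → ℝ := fun n => |A n r (if Even n then q else p)| with hu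
  have hupos : ∀ n, 0 < u n := by
    intro n
    by_cases h : Even n <;>
      simp only [hu, h, if_pos, if_neg, if_true, if_false] <;>
      exact abs_pos.mpr ((cyc_facts (hcyc n)).2.1 r _ (by assumption))
  have hrec : ∀ n, u (n + 2) = (if Even n then c else c') * u (n + 1) - u n := by
    intro n
    have he2 : Even (n + 2) ↔ Even n := by simp [Nat.even_add]
    have he1 : Even (n + 1) ↔ ¬ Even n := by simp [Nat.even_add_one]
    by_cases h : Even n
    · have hl0 : ℓ n = p := by simp [hℓ, h]
      have hl1 : ℓ (n + 1) = q := by simp [hℓ, Nat.even_add_one, h]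
      have e1 : |A (n+1) r q| = |A n r p| * |A n p q| - |A n r q| := by
        rw [hstep n, hl0]
        exact mutB_abs (hcyc n) (by rw [← hl0, ← hstep n]; exact hcyc (n+1)) hrq hpq.symm hrp
      have e2 : |A (n+2) r q| = |A (n+1) r q| := by
        rw [hstep (n+1), hl1, mutB_apply_k_col (hdiag (n+1) q) r hrq, abs_neg]
      have e3 : |A (n+1) r p| = |A n r p| := by
        rw [hstep n, hl0, mutB_apply_k_col (hdiag n p) r hrp, abs_neg]
      have hun : u n = |A n r q| := by simp [hu, h]
      have hun1 : u (n+1) = |A (n+1) r p| := by simp [hu, he1, h]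
      have hun2 : u (n+2) = |A (n+2) r q| := by simp [hu, he2, h]
      rw [hun, hun1, hun2, e2, e1, e3, if_pos h, (hconst n).1]
      ring
    · have hl0 : ℓ n = q := by simp [hℓ, h]
      have hl1 : ℓ (n + 1) = p := by simp [hℓ, Nat.even_add_one, h]
      have e1 : |A (n+1) r p| = |A n r q| * |A n q p| - |A n r p| := by
        rw [hstep n, hl0]
        exact mutB_abs (hcyc n) (by rw [← hl0, ← hstep n]; exact hcyc (n+1)) hrp hpq hrq
      have e2 : |A (n+2) r p| = |A (n+1) r p| := by
        rw [hstep (n+1), hl1, mutB_apply_k_col (hdiag (n+1) p) r hrp, abs_neg]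
      have e3 : |A (n+1) r q| = |A n r q| := by
        rw [hstep n, hl0, mutB_apply_k_col (hdiag n q) r hrq, abs_neg]
      have hun : u n = |A n r p| := by simp [hu, h]
      have hun1 : u (n+1) = |A (n+1) r q| := by simp [hu, he1, h]
      have hun2 : u (n+2) = |A (n+2) r p| := by simp [hu, he2, h]
      rw [hun, hun1, hun2, e2, e1, e3, if_neg h, (hconst n).2]
      ring
  -- rescale to get a constant-coefficient recurrence
  set g : ℝ := Real.sqrt c * Real.sqrt c' with hg
  have hsq : Real.sqrt c * Real.sqrt c = c := Real.mul_self_sqrt hcpos.le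
  have hsq' : Real.sqrt c' * Real.sqrt c' = c' := Real.mul_self_sqrt hc'pos.le
  have hsp : 0 < Real.sqrt c := Real.sqrt_pos.mpr hcpos
  have hsp' : 0 < Real.sqrt c' := Real.sqrt_pos.mpr hc'pos
  have hW0 : A 0 = Bmat B w := by rw [hA]; show Bmat B (w ++ altSeq p q 0) = _; simp [altSeq]
  have hcc : c * c' < 4 := by rw [hc, hc', hW0]; exact hsym
  have hg2 : g < 2 := by nlinarith
  set v : ℕ → ℝ := fun n => u n * (if Even n then Real.sqrt c' else Real.sqrt c) with hv
  have hvpos : ∀ n, 0 < v n := by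
    intro n
    by_cases h : Even n <;> simp only [hv, h, if_true, if_false] <;>
      [exact mul_pos (hupos n) hsp'; exact mul_pos (hupos n) hsp]
  have hvrec : ∀ n, v (n + 2) = g * v (n + 1) - v n := by
    intro n
    have he2 : Even (n + 2) ↔ Even n := by simp [Nat.even_add]
    have he1 : Even (n + 1) ↔ ¬ Even n := by simp [Nat.even_add_one]
    have hr := hrec n
    by_cases h : Even n
    · have t2 : v (n+2) = u (n+2) * Real.sqrt c' := by simp [hv, he2, h]
      have t1 : v (n+1) = u (n+1) * Real.sqrt c := by simp [hv, he1, h]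
      have t0 : v n = u n * Real.sqrt c' := by simp [hv, h]
      rw [t2, t1, t0, hr, if_pos h, hg]
      linear_combination (-(u (n+1) * Real.sqrt c')) * hsq
    · have t2 : v (n+2) = u (n+2) * Real.sqrt c := by simp [hv, he2, h]
      have t1 : v (n+1) = u (n+1) * Real.sqrt c' := by simp [hv, he1, h]
      have t0 : v n = u n * Real.sqrt c := by simp [hv, h]
      rw [t2, t1, t0, hr, if_neg h, hg]
      linear_combination (-(u (n+1) * Real.sqrt c)) * hsq'
  exact no_pos_recurrence (fun _ => g) g hg2 (fun _ => le_rfl) v hvpos hvrec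

end ProdFour
section SignHelpers

lemma sgn_mul_pos {a b c : ℝ} (h1 : 0 < a * b) (h2 : 0 < b * c) : 0 < a * c := by
  rcases lt_trichotomy b 0 with h | h | h
  · have ha : a < 0 := by nlinarith
    have hc : c < 0 := by nlinarith
    nlinarith
  · rw [h] at h1; nlinarith
  · have ha : 0 < a := by nlinarith
    have hc : 0 < c := by nlinarith
    nlinarith

lemma sgn_mul_neg {a b c : ℝ} (h1 : 0 < a * b) (h2 : b * c < 0) : a * c < 0 := by
  rcases lt_trichotomy b 0 with h | h | h
  · have ha : a < 0 := by nlinarith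
    have hc : 0 < c := by nlinarith
    nlinarith
  · rw [h] at h1; nlinarith
  · have ha : 0 < a := by nlinarith
    have hc : c < 0 := by nlinarith
    nlinarith

lemma sgn_mul_pos' {a b c : ℝ} (h1 : a * b < 0) (h2 : b * c < 0) : 0 < a * c := by
  rcases lt_trichotomy b 0 with h | h | h
  · have ha : 0 < a := by nlinarith
    have hc : 0 < c := by nlinarith
    nlinarith
  · rw [h] at h1; nlinarith
  · have ha : a < 0 := by nlinarith
    have hc : c < 0 := by nlinarith
    nlinarith

/-- Complete sign table for a cyclic matrix, anchored at the sign of `A d t`. -/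
lemma signTable {A : Mat3} (hA : IsCyclic3 A) {s : ℝ} {d t k : Fin 3}
    (hdt : d ≠ t) (htk : t ≠ k) (hdk : d ≠ k) (anchor : 0 < s * A d t) :
    0 < s * A t k ∧ 0 < s * A k d ∧ s * A t d < 0 ∧ s * A k t < 0 ∧ s * A d k < 0 := by
  obtain ⟨hd0, hnz, hskew, hchain⟩ := cyc_facts hA
  have c1 : 0 < A d t * A t k := hchain d t k hdt htk hdk
  have c2 : 0 < A t k * A k d := hchain t k d htk (Ne.symm hdk) (Ne.symm hdt)
  have htk' : 0 < s * A t k := sgn_mul_pos anchor c1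
  have hkd' : 0 < s * A k d := sgn_mul_pos htk' c2
  have htd : s * A t d < 0 := sgn_mul_neg anchor (hskew d t hdt)
  have hkt : s * A k t < 0 := sgn_mul_neg htk' (hskew t k htk)
  have hdk' : s * A d k < 0 := sgn_mul_neg hkd' (hskew k d (Ne.symm hdk))
  exact ⟨htk', hkd', htd, hkt, hdk'⟩

end SignHelpers

section EpsFacts

variable {B : Mat3} {ε : List (Fin 3) → Fin 3 → ℝ}

lemma eps_determined (hε : IsTropSigns B ε) {w : List (Fin 3)} (hw : ReducedSeq w)
    {j : Fin 3} {s : ℝ} (hs : s = 1 ∨ s = -1) {i : Fin 3}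
    (hi : 0 < s * Cmat B w i j) : ε w j = s := by
  have hc := (hε w hw j).2 i
  rcases (hε w hw j).1 with h1 | h1 <;> rw [h1] at hc ⊢ <;> rcases hs with h2 | h2 <;>
    subst h2 <;> first | rfl | linarith

lemma max_neg_eq (b : ℝ) : max (-b) 0 = max b 0 - b := by
  rcases le_total b 0 with h | h
  · rw [max_eq_left (by linarith), max_eq_right h]; ring
  · rw [max_eq_right (by linarith), max_eq_left h]; ring

/-- The `c`-vector recursion, in terms of tropical signs. -/
lemma Cmat_step (hε : IsTropSigns B ε) {w : List (Fin 3)} (hw : ReducedSeq w)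
    {k j : Fin 3} (hjk : j ≠ k) (i : Fin 3) :
    Cmat B (w ++ [k]) i j = Cmat B w i j +
      Cmat B w i k * max (ε w k * Bmat B w k j) 0 := by
  rw [Cmat_append_apply, if_neg hjk]
  have hc := (hε w hw k).2 i
  rcases (hε w hw k).1 with h1 | h1 <;> rw [h1] at hc ⊢
  · rw [max_eq_right (by linarith : -(Cmat B w i k) ≤ 0), one_mul]
    ring
  · rw [max_eq_left (by linarith : 0 ≤ -(Cmat B w i k)), neg_one_mul, max_neg_eq]
    ring

lemma Cmat_step_k {w : List (Fin 3)} {k : Fin 3} (hkk : Bmat B w k k = 0) (i : Fin 3) :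
    Cmat B (w ++ [k]) i k = - Cmat B w i k := by
  rw [Cmat_append_apply, if_pos rfl, hkk]
  simp

end EpsFacts

section Flip

/-- Behaviour of an entry of a sign-coherent column under a sign-flipping addition. -/
lemma flip_entry {s a x y : ℝ} (hs : s = 1 ∨ s = -1) (ha : 0 < s * a)
    (hdom : 2 * |x| ≤ |a| * |y|) (hy : 0 ≤ s * y) :
    0 ≤ s * (x + y * max (s * a) 0) ∧ |a| * |y| - |x| ≤ |x + y * max (s * a) 0| ∧
      (0 < s * y → 0 < s * (x + y * max (s * a) 0)) := by
  rcases hs with h | h <;> subst h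
  · simp only [one_mul] at ha hy ⊢
    rw [max_eq_left ha.le, abs_of_pos ha, abs_of_nonneg hy] at *
    have h1 : 0 ≤ x + y * a := by
      cases abs_cases x with
      | inl hx => nlinarith
      | inr hx => nlinarith
    rw [abs_of_nonneg h1]
    refine ⟨h1, by cases abs_cases x with | inl hx => nlinarith | inr hx => nlinarith, ?_⟩
    intro hy'
    cases abs_cases x with
    | inl hx => nlinarith
    | inr hx => nlinarith
  · simp only [neg_one_mul] at ha hy ⊢
    have ha' : a < 0 := by linarith
    have hy2 : y ≤ 0 := by linarith
    rw [max_eq_left (by linarith : (0:ℝ) ≤ -a), abs_of_neg ha', abs_of_nonpos hy2] at *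
    have h1 : x + y * -a ≤ 0 := by
      cases abs_cases x with
      | inl hx => nlinarith
      | inr hx => nlinarith
    rw [abs_of_nonpos h1]
    refine ⟨by linarith, by cases abs_cases x with | inl hx => nlinarith | inr hx => nlinarith, ?_⟩
    intro hy3
    cases abs_cases x with
    | inl hx => nlinarith
    | inr hx => nlinarith

end Flip
section Invariant

lemma third_exists : ∀ p q : Fin 3, p ≠ q → ∃ r, r ≠ p ∧ r ≠ q := by decide

lemma cover3 : ∀ a b c j : Fin 3, a ≠ b → a ≠ c → b ≠ c → j = a ∨ j = b ∨ j = c := by decide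

lemma abs_eq_smul {s x : ℝ} (hs : s = 1 ∨ s = -1) (h : 0 ≤ s * x) : |x| = s * x := by
  rcases hs with h' | h' <;> subst h'
  · rw [one_mul] at h ⊢; exact abs_of_nonneg h
  · rw [neg_one_mul] at h ⊢; exact abs_of_nonpos (by linarith)

lemma neg_pm {s : ℝ} (hs : s = 1 ∨ s = -1) : -s = 1 ∨ -s = -1 := by
  rcases hs with h | h <;> rw [h] <;> norm_num

/-- The invariant carried along a reduced mutation sequence ending in `t`. -/
def InvP (B : Mat3) (ε : List (Fin 3) → Fin 3 → ℝ) (w : List (Fin 3)) (t : Fin 3) : Prop :=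
  ∃ m d : Fin 3, (∀ j, j ≠ m → ε w j = - ε w m) ∧ d ≠ t ∧
    0 < ε w d * Bmat B w d t ∧
    (∀ i, 2 * |Cmat B w i t| ≤ |Bmat B w d t| * |Cmat B w i d|) ∧
    (m = t ∨ d = m) ∧
    (∀ j, ∃ i, 0 < ε w j * Cmat B w i j)

/-- Mutation at a vertex `k` whose tropical sign matches that of the target column `y`,
with `0 < ε_k b_{ky}`. -/
lemma inv_step_noflip {B : Mat3} (hB : ClusterCyclic B) {ε : List (Fin 3) → Fin 3 → ℝ}
    (hε : IsTropSigns B ε) {v : List (Fin 3)} {k y z : Fin 3}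
    (hred : ReducedSeq v) (hred' : ReducedSeq (v ++ [k]))
    (hky : k ≠ y) (hkz : k ≠ z) (hyz : y ≠ z)
    {g : ℝ} (hgpm : g = 1 ∨ g = -1) (hgk : ε v k = g) (hgy : ε v y = g)
    (hsky : 0 < g * Bmat B v k y)
    (hnz : ∀ j, ∃ i, 0 < ε v j * Cmat B v i j) :
    (ε (v ++ [k]) k = -g ∧ ε (v ++ [k]) y = g ∧ ε (v ++ [k]) z = ε v z) ∧
    (0 < ε (v ++ [k]) y * Bmat B (v ++ [k]) y k) ∧
    (∀ i, 2 * |Cmat B (v ++ [k]) i k| ≤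
      |Bmat B (v ++ [k]) y k| * |Cmat B (v ++ [k]) i y|) ∧
    (∀ j, ∃ i, 0 < ε (v ++ [k]) j * Cmat B (v ++ [k]) i j) := by
  have hcv := hB v hred
  obtain ⟨hd0, hne0, hskew, hchain⟩ := cyc_facts hcv
  obtain ⟨hTyz, hTzk, hTyk, hTzy, hTkz⟩ := signTable hcv hky hyz hkz hsky
  have hA'yk : Bmat B (v ++ [k]) y k = - Bmat B v y k := by
    rw [Bmat_append]; exact mutB_apply_k_col (hd0 k) y (Ne.symm hky)
  have hCk : ∀ i, Cmat B (v ++ [k]) i k = - Cmat B v i k := Cmat_step_k (hd0 k)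
  have hCy : ∀ i, Cmat B (v ++ [k]) i y =
      Cmat B v i y + Cmat B v i k * (g * Bmat B v k y) := by
    intro i
    rw [Cmat_step hε hred (Ne.symm hky) i, hgk, max_eq_left hsky.le]
  have hCz : ∀ i, Cmat B (v ++ [k]) i z = Cmat B v i z := by
    intro i
    rw [Cmat_step hε hred (Ne.symm hkz) i, hgk, max_eq_right hTkz.le, mul_zero, add_zero]
  have hcohk : ∀ i, 0 ≤ g * Cmat B v i k := by
    intro i; have := (hε v hred k).2 i; rwa [hgk] at this
  have hcohy : ∀ i, 0 ≤ g * Cmat B v i y := by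
    intro i; have := (hε v hred y).2 i; rwa [hgy] at this
  have hkey : ∀ i, 0 ≤ g * Cmat B (v ++ [k]) i y ∧
      |Bmat B v k y| * |Cmat B v i k| ≤ |Cmat B (v ++ [k]) i y| := by
    intro i
    have e1 : g * Cmat B (v ++ [k]) i y =
        g * Cmat B v i y + (g * Cmat B v i k) * (g * Bmat B v k y) := by
      rw [hCy i]; ring
    have h2 : 0 ≤ (g * Cmat B v i k) * (g * Bmat B v k y) :=
      mul_nonneg (hcohk i) hsky.le
    have h3 : 0 ≤ g * Cmat B (v ++ [k]) i y := by rw [e1]; linarith [hcohy i]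
    refine ⟨h3, ?_⟩
    rw [abs_eq_smul hgpm h3, abs_eq_smul hgpm (hcohk i), abs_eq_smul hgpm hsky.le, e1]
    nlinarith [hcohy i]
  have hek' : ε (v ++ [k]) k = -g := by
    obtain ⟨i, hi⟩ := hnz k
    rw [hgk] at hi
    exact eps_determined hε hred' (neg_pm hgpm) (i := i) (by rw [hCk i]; nlinarith [hi])
  have hey' : ε (v ++ [k]) y = g := by
    obtain ⟨i, hi⟩ := hnz y
    rw [hgy] at hi
    refine eps_determined hε hred' hgpm (i := i) ?_
    have h2 : 0 ≤ (g * Cmat B v i k) * (g * Bmat B v k y) :=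
      mul_nonneg (hcohk i) hsky.le
    rw [hCy i]
    nlinarith [hi, h2]
  have hez' : ε (v ++ [k]) z = ε v z := by
    obtain ⟨i, hi⟩ := hnz z
    exact eps_determined hε hred' (hε v hred z).1 (i := i) (by rw [hCz i]; exact hi)
  refine ⟨⟨hek', hey', hez'⟩, ?_, ?_, ?_⟩
  · rw [hey', hA'yk]
    nlinarith [hTyk]
  · intro i
    rw [hCk i, hA'yk, abs_neg, abs_neg]
    have h4 := abs_prod_ge_four B hB v hred (Ne.symm hky)
    nlinarith [(hkey i).2, h4, abs_nonneg (Cmat B v i k), abs_nonneg (Bmat B v y k),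
      abs_nonneg (Cmat B (v ++ [k]) i y)]
  · intro j
    rcases cover3 k y z j hky hkz hyz with rfl | rfl | rfl
    · obtain ⟨i, hi⟩ := hnz j
      rw [hgk] at hi
      exact ⟨i, by rw [hek', hCk i]; nlinarith [hi]⟩
    · obtain ⟨i, hi⟩ := hnz j
      rw [hgy] at hi
      refine ⟨i, ?_⟩
      rw [hey', hCy i]
      have h2 := mul_nonneg (hcohk i) hsky.le
      nlinarith [hi, h2]
    · obtain ⟨i, hi⟩ := hnz j
      exact ⟨i, by rw [hez', hCz i]; exact hi⟩

end Invariant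
section StepLemma

lemma inv_step {B : Mat3} (hB : ClusterCyclic B) {ε : List (Fin 3) → Fin 3 → ℝ}
    (hε : IsTropSigns B ε) {v : List (Fin 3)} {t k : Fin 3}
    (hred : ReducedSeq v) (hred' : ReducedSeq (v ++ [k]))
    (htk : t ≠ k) (hI : InvP B ε v t) : InvP B ε (v ++ [k]) k := by
  obtain ⟨m, d, hm, hdt, hsgn, hdom, hmt, hnz⟩ := hI
  have hcv := hB v hred
  obtain ⟨hd0, hne0, hskew, hchain⟩ := cyc_facts hcv
  have hsd := (hε v hred d).1
  by_cases hkd : k = d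
  · -- CASE I : mutation at the dominant vertex; the column at `t` flips.
    subst hkd
    obtain ⟨x, hxt, hxk⟩ := third_exists t k htk
    obtain ⟨hTtx, hTxk, hTtk, hTxt, hTkx⟩ :=
      signTable hcv (Ne.symm htk) (Ne.symm hxt) (Ne.symm hxk) hsgn
    have hA'tk : Bmat B (v ++ [k]) t k = - Bmat B v t k := by
      rw [Bmat_append]; exact mutB_apply_k_col (hd0 k) t htk
    have hCk : ∀ i, Cmat B (v ++ [k]) i k = - Cmat B v i k := Cmat_step_k (hd0 k)
    have hCt : ∀ i, Cmat B (v ++ [k]) i t =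
        Cmat B v i t + Cmat B v i k * max (ε v k * Bmat B v k t) 0 :=
      fun i => Cmat_step hε hred htk i
    have hCx : ∀ i, Cmat B (v ++ [k]) i x = Cmat B v i x := by
      intro i
      rw [Cmat_step hε hred hxk i, max_eq_right hTkx.le, mul_zero, add_zero]
    have FE : ∀ i, 0 ≤ ε v k * (Cmat B v i t + Cmat B v i k * max (ε v k * Bmat B v k t) 0) ∧
        |Bmat B v k t| * |Cmat B v i k| - |Cmat B v i t| ≤
          |Cmat B v i t + Cmat B v i k * max (ε v k * Bmat B v k t) 0| ∧
        (0 < ε v k * Cmat B v i k →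
          0 < ε v k * (Cmat B v i t + Cmat B v i k * max (ε v k * Bmat B v k t) 0)) :=
      fun i => flip_entry hsd hsgn (hdom i) ((hε v hred k).2 i)
    have hek' : ε (v ++ [k]) k = -(ε v k) := by
      obtain ⟨i, hi⟩ := hnz k
      exact eps_determined hε hred' (neg_pm hsd) (i := i) (by rw [hCk i]; nlinarith [hi])
    have het' : ε (v ++ [k]) t = ε v k := by
      obtain ⟨i, hi⟩ := hnz k
      exact eps_determined hε hred' hsd (i := i) (by rw [hCt i]; exact (FE i).2.2 hi)
    have hex' : ε (v ++ [k]) x = ε v x := by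
      obtain ⟨i, hi⟩ := hnz x
      exact eps_determined hε hred' (hε v hred x).1 (i := i) (by rw [hCx i]; exact hi)
    have hsign' : 0 < ε (v ++ [k]) t * Bmat B (v ++ [k]) t k := by
      rw [het', hA'tk]; nlinarith [hTtk]
    have hdom' : ∀ i, 2 * |Cmat B (v ++ [k]) i k| ≤
        |Bmat B (v ++ [k]) t k| * |Cmat B (v ++ [k]) i t| := by
      intro i
      rw [hCk i, hA'tk, abs_neg, abs_neg, hCt i]
      have h4 : 4 ≤ |Bmat B v t k| * |Bmat B v k t| :=
        abs_prod_ge_four B hB v hred htk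
      have h5 := (FE i).2.1
      have h6 := hdom i
      nlinarith [abs_nonneg (Cmat B v i k), abs_nonneg (Cmat B v i t),
        abs_nonneg (Bmat B v t k), abs_nonneg (Bmat B v k t),
        mul_le_mul_of_nonneg_left h5 (abs_nonneg (Bmat B v t k)),
        mul_le_mul_of_nonneg_left h6 (abs_nonneg (Bmat B v t k))]
    have hnz' : ∀ j, ∃ i, 0 < ε (v ++ [k]) j * Cmat B (v ++ [k]) i j := by
      intro j
      rcases cover3 k t x j (Ne.symm htk) (Ne.symm hxk) (Ne.symm hxt) with rfl | rfl | rfl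
      · obtain ⟨i, hi⟩ := hnz j
        exact ⟨i, by rw [hek', hCk i]; nlinarith [hi]⟩
      · obtain ⟨i, hi⟩ := hnz k
        exact ⟨i, by rw [het', hCt i]; exact (FE i).2.2 hi⟩
      · obtain ⟨i, hi⟩ := hnz j
        exact ⟨i, by rw [hex', hCx i]; exact hi⟩
    have hxpm := (hε v hred x).1
    have hxs : ε v x = ε v k ∨ ε v x = -(ε v k) := by
      rcases hxpm with h | h <;> rcases hsd with h' | h' <;> rw [h, h'] <;> norm_num
    rcases hxs with hxx | hxx
    · refine ⟨k, t, ?_, htk, hsign', hdom', Or.inl rfl, hnz'⟩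
      intro j hj
      rcases cover3 t x k j (Ne.symm hxt) htk hxk with rfl | rfl | rfl
      · rw [het', hek', neg_neg]
      · rw [hex', hek', hxx, neg_neg]
      · exact absurd rfl hj
    · refine ⟨t, t, ?_, htk, hsign', hdom', Or.inr rfl, hnz'⟩
      intro j hj
      rcases cover3 k x t j (Ne.symm hxk) (Ne.symm htk) hxt with rfl | rfl | rfl
      · rw [hek', het']
      · rw [hex', het', hxx]
      · exact absurd rfl hj
  · -- CASE II : mutation at the third vertex; no flip occurs.
    rcases hmt with hmt | hdm
    · -- the minority vertex is `t`
      obtain rfl : t = m := hmt.symm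
      have hekd : ε v k = ε v d := by rw [hm k (Ne.symm htk), hm d hdt]
      have het : ε v t = -(ε v d) := by have h2 := hm d hdt; linarith
      obtain ⟨Ttk, Tkd, Ttd, Tkt, Tdk⟩ :=
        signTable hcv hdt htk (fun h => hkd h.symm) hsgn
      obtain ⟨⟨hek', hey', hez'⟩, hsign', hdom', hnz'⟩ :=
        inv_step_noflip hB hε hred hred' hkd (Ne.symm htk) hdt hsd hekd rfl Tkd hnz
      refine ⟨d, d, ?_, fun h => hkd h.symm, hsign', hdom', Or.inr rfl, hnz'⟩
      intro j hj
      rcases cover3 k t d j (Ne.symm htk) hkd (Ne.symm hdt) with rfl | rfl | rfl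
      · rw [hek', hey']
      · rw [hez', hey', het]
      · exact absurd rfl hj
    · -- the minority vertex is `d`
      subst hdm
      have hekt : ε v k = -(ε v d) := hm k hkd
      have het : ε v t = -(ε v d) := hm t (Ne.symm hdt)
      obtain ⟨Ttk, Tkd, Ttd, Tkt, Tdk⟩ :=
        signTable hcv hdt htk (fun h => hkd h.symm) hsgn
      have hsky : 0 < -(ε v d) * Bmat B v k t := by nlinarith [Tkt]
      obtain ⟨⟨hek', hey', hez'⟩, hsign', hdom', hnz'⟩ :=
        inv_step_noflip hB hε hred hred' (Ne.symm htk) hkd (Ne.symm hdt)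
          (neg_pm hsd) hekt het hsky hnz
      refine ⟨t, t, ?_, htk, hsign', hdom', Or.inr rfl, hnz'⟩
      intro j hj
      rcases cover3 k d t j hkd (Ne.symm htk) hdt with rfl | rfl | rfl
      · rw [hek', hey']
      · rw [hez', hey', neg_neg]
      · exact absurd rfl hj

end StepLemma
section BaseCase

lemma two_others : ∀ t : Fin 3, ∃ p q : Fin 3, p ≠ t ∧ q ≠ t ∧ p ≠ q := by decide

lemma inv_base {B : Mat3} (hB : ClusterCyclic B) {ε : List (Fin 3) → Fin 3 → ℝ}
    (hε : IsTropSigns B ε) (t : Fin 3) : InvP B ε [t] t := by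
  have hrednil : ReducedSeq ([] : List (Fin 3)) := List.isChain_nil
  have hred1 : ReducedSeq [t] := List.isChain_singleton t
  have hfB := cyc_facts (hB [] hrednil)
  rw [Bmat_nil] at hfB
  obtain ⟨hd0, hne0, hskew, hchain⟩ := hfB
  -- entries of the C-matrix after one mutation
  have hCgen : ∀ i j : Fin 3, Cmat B [t] i j =
      (if i = j then (1:ℝ) else 0) * (if j = t then (-1:ℝ) else 1)
      + (if i = t then (1:ℝ) else 0) * max (B t j) 0
      + max (-(if i = t then (1:ℝ) else 0)) 0 * B t j := by
    intro i j
    have h := Cmat_append_apply B [] t i j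
    simp only [List.nil_append] at h
    rw [h, Cmat_nil, Bmat_nil]
    by_cases hij : i = j <;> by_cases hit : i = t <;>
      simp [Matrix.one_apply, hij, hit]
  have hCtt : Cmat B [t] t t = -1 := by rw [hCgen, hd0 t]; norm_num
  have hCit : ∀ i, i ≠ t → Cmat B [t] i t = 0 := by
    intro i hit; rw [hCgen]
    simp [hit]
  have hCjj : ∀ j, j ≠ t → Cmat B [t] j j = 1 := by
    intro j hjt; rw [hCgen]
    simp [hjt]
  have hCtj : ∀ j, j ≠ t → Cmat B [t] t j = max (B t j) 0 := by
    intro j hjt; rw [hCgen]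
    simp [Ne.symm hjt]
  have hCij : ∀ i j, i ≠ j → i ≠ t → Cmat B [t] i j = 0 := by
    intro i j hij hit; rw [hCgen]
    simp [hij, hit]
  -- entries of the B-matrix after one mutation
  have hA't : ∀ i, i ≠ t → Bmat B [t] i t = - B i t := by
    intro i hit
    have h := Bmat_append B [] t
    simp only [List.nil_append] at h
    rw [h, Bmat_nil]
    exact mutB_apply_k_col (hd0 t) i hit
  -- tropical signs
  have het : ε [t] t = -1 :=
    eps_determined hε hred1 (Or.inr rfl) (i := t) (by rw [hCtt]; norm_num)
  have hej : ∀ j, j ≠ t → ε [t] j = 1 := fun j hjt =>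
    eps_determined hε hred1 (Or.inl rfl) (i := j) (by rw [hCjj j hjt]; norm_num)
  -- choose the dominant vertex `d` with `B d t < 0`
  obtain ⟨p, q, hpt, hqt, hpq⟩ := two_others t
  obtain ⟨d, hdt, hBdt⟩ : ∃ d, d ≠ t ∧ B d t < 0 := by
    have hopp : B p t * B q t < 0 :=
      sgn_mul_neg (hchain p t q hpt (Ne.symm hqt) hpq) (hskew t q (Ne.symm hqt))
    rcases lt_trichotomy (B p t) 0 with h | h | h
    · exact ⟨p, hpt, h⟩
    · exact absurd h (hne0 p t hpt)
    · exact ⟨q, hqt, by nlinarith⟩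
  have hBtd : 0 < B t d := by
    have := hskew d t hdt
    nlinarith
  have h4 : 4 ≤ |B d t| * |B t d| := by
    have := abs_prod_ge_four B hB [] hrednil (hdt : d ≠ t)
    rwa [Bmat_nil] at this
  refine ⟨t, d, ?_, hdt, ?_, ?_, Or.inl rfl, ?_⟩
  · intro j hjt
    rw [hej j hjt, het]; norm_num
  · rw [hej d hdt, hA't d hdt]; nlinarith
  · intro i
    rw [hA't d hdt, abs_neg]
    by_cases hit : i = t
    · subst hit
      rw [hCtt, hCtj d hdt, max_eq_left hBtd.le, abs_of_pos hBtd, abs_of_neg hBdt]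
      rw [abs_of_neg hBdt, abs_of_pos hBtd] at h4
      have habs1 : |(-1:ℝ)| = 1 := by norm_num
      rw [habs1]
      linarith
    · rw [hCit i hit, abs_zero, mul_zero]
      positivity
  · intro j
    by_cases hjt : j = t
    · subst hjt
      exact ⟨j, by rw [het, hCtt]; norm_num⟩
    · exact ⟨j, by rw [hej j hjt, hCjj j hjt]; norm_num⟩

end BaseCase
section Count

lemma inv_holds {B : Mat3} (hB : ClusterCyclic B) {ε : List (Fin 3) → Fin 3 → ℝ}
    (hε : IsTropSigns B ε) :
    ∀ (u : List (Fin 3)) (t : Fin 3), ReducedSeq (u ++ [t]) → InvP B ε (u ++ [t]) t := by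
  intro u
  induction u using List.reverseRecOn with
  | nil =>
    intro t _
    rw [List.nil_append]
    exact inv_base hB hε t
  | append_singleton u s ih =>
    intro t hred'
    have hred : ReducedSeq (u ++ [s]) := (List.isChain_append.mp hred').1
    have hst : s ≠ t := by
      have h3 := (List.isChain_append.mp hred').2.2
      exact h3 s (by rw [List.getLast?_concat]; rfl) t rfl
    exact inv_step hB hε hred hred' hst (ih s hred)

lemma count_four {A : Mat3} (hA : IsCyclic3 A) {e : Fin 3 → ℝ}
    (hpm : ∀ j, e j = 1 ∨ e j = -1) {m : Fin 3} (hm : ∀ j, j ≠ m → e j = - e m) :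
    {p : Fin 3 × Fin 3 | p.1 ≠ p.2 ∧
      (0 < e p.1 * A p.1 p.2 ∨ 0 < e p.2 * A p.2 p.1)}.ncard = 4 := by
  classical
  obtain ⟨hd0, hne0, hskew, hchain⟩ := cyc_facts hA
  obtain ⟨p, q, hpm', hqm, hpq⟩ := two_others m
  have hemm : e m = 1 ∨ e m = -1 := hpm m
  have hem2 : e m * e m = 1 := by rcases hemm with h | h <;> rw [h] <;> norm_num
  have hopp : A m p * A m q < 0 := by
    have h1 : 0 < A m q * A p m := by
      rw [mul_comm]; exact hchain p m q hpm' (Ne.symm hqm) hpq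
    have h2 : A p m * A m p < 0 := hskew p m hpm'
    rw [mul_comm (A m p)]
    exact sgn_mul_neg h1 h2
  obtain ⟨y, hym, hy⟩ : ∃ y, y ≠ m ∧ e m * A m y < 0 := by
    rcases lt_trichotomy (e m * A m p) 0 with h | h | h
    · exact ⟨p, hpm', h⟩
    · exfalso
      rcases mul_eq_zero.mp h with h' | h'
      · rcases hemm with h'' | h'' <;> rw [h''] at h' <;> norm_num at h'
      · exact hne0 m p (Ne.symm hpm') h'
    · exact ⟨q, hqm, sgn_mul_neg h hopp⟩
  have hyA : e y * A y m < 0 := by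
    have h1 : 0 < e m * A y m := sgn_mul_pos' hy (hskew m y (Ne.symm hym))
    rw [hm y hym]
    nlinarith
  have hne : ∀ a b : Fin 3, a ≠ b → e a * A a b ≠ 0 := by
    intro a b hab
    rcases hpm a with h | h <;> rw [h] <;> simp [hne0 a b hab]
  have hchar : ∀ i j : Fin 3, i ≠ j →
      (¬(0 < e i * A i j ∨ 0 < e j * A j i) ↔ (i = m ∧ j = y) ∨ (i = y ∧ j = m)) := by
    intro i j hij
    constructor
    · intro hcon
      push_neg at hcon
      obtain ⟨h1, h2⟩ := hcon
      have hi1 : e i * A i j < 0 := h1.lt_of_ne (hne i j hij)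
      have hj1 : e j * A j i < 0 := h2.lt_of_ne (hne j i (Ne.symm hij))
      have hij' : e i * e j < 0 := by
        have h3 : 0 < (e i * A i j) * (e j * A j i) := mul_pos_of_neg_of_neg hi1 hj1
        have h4 : A i j * A j i < 0 := hskew i j hij
        by_contra h5
        push_neg at h5
        nlinarith
      have him : i = m ∨ j = m := by
        by_contra hcon2
        push_neg at hcon2
        have e1 := hm i hcon2.1
        have e2 := hm j hcon2.2
        rw [e1, e2] at hij'
        nlinarith
      rcases him with h | h
      · left
        rw [h] at hi1 hij
        refine ⟨h, ?_⟩
        by_contra hjy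
        have hjm : j ≠ m := Ne.symm hij
        have hoppjy : A m y * A m j < 0 := by
          have ha : 0 < A m j * A y m := by
            rw [mul_comm]; exact hchain y m j hym (Ne.symm hjm) (fun hh => hjy hh.symm)
          have hb : A y m * A m y < 0 := hskew y m hym
          rw [mul_comm (A m y)]
          exact sgn_mul_neg ha hb
        have := sgn_mul_pos' hy hoppjy
        linarith
      · right
        rw [h] at hj1 hij
        refine ⟨?_, h⟩
        by_contra hiy
        have him' : i ≠ m := hij
        have hoppiy : A m y * A m i < 0 := by
          have ha : 0 < A m i * A y m := by
            rw [mul_comm]; exact hchain y m i hym (Ne.symm him') (fun hh => hiy hh.symm)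
          have hb : A y m * A m y < 0 := hskew y m hym
          rw [mul_comm (A m y)]
          exact sgn_mul_neg ha hb
        have := sgn_mul_pos' hy hoppiy
        linarith
    · rintro (⟨rfl, rfl⟩ | ⟨rfl, rfl⟩) <;> rw [not_or]
      · exact ⟨not_lt.mpr hy.le, not_lt.mpr hyA.le⟩
      · exact ⟨not_lt.mpr hyA.le, not_lt.mpr hy.le⟩
  have hym2 : ((m, y) : Fin 3 × Fin 3) ≠ (y, m) := by
    intro h
    rw [Prod.ext_iff] at h
    exact hym h.1.symm
  have hset : {p : Fin 3 × Fin 3 | p.1 ≠ p.2 ∧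
      (0 < e p.1 * A p.1 p.2 ∨ 0 < e p.2 * A p.2 p.1)} =
      ↑((Finset.univ.filter (fun p : Fin 3 × Fin 3 => p.1 ≠ p.2)) \
        ({(m, y), (y, m)} : Finset (Fin 3 × Fin 3))) := by
    ext ⟨i, j⟩
    simp only [Set.mem_setOf_eq, Finset.coe_sdiff, Set.mem_diff, Finset.mem_coe,
      Finset.mem_filter, Finset.mem_univ, true_and, Finset.mem_insert,
      Finset.mem_singleton, Prod.mk.injEq]
    constructor
    · rintro ⟨hij, hcond⟩
      refine ⟨hij, ?_⟩
      intro hmem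
      have := (hchar i j hij).mpr hmem
      exact this hcond
    · rintro ⟨hij, hnotpair⟩
      refine ⟨hij, ?_⟩
      by_contra hcond
      exact hnotpair ((hchar i j hij).mp hcond)
  rw [hset, Set.ncard_coe_finset, Finset.card_sdiff_of_subset]
  · have h6 : (Finset.univ.filter (fun p : Fin 3 × Fin 3 => p.1 ≠ p.2)).card = 6 := by decide
    have h2 : ({(m, y), (y, m)} : Finset (Fin 3 × Fin 3)).card = 2 := by
      rw [Finset.card_insert_of_notMem (by simpa using hym2), Finset.card_singleton]
    rw [h6, h2]
  · intro r hr
    simp only [Finset.mem_insert, Finset.mem_singleton] at hr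
    rcases hr with rfl | rfl <;> simp [Finset.mem_filter] <;>
      [exact Ne.symm hym; exact hym]

end Count

theorem Pset_has_four_elements (B : Mat3) (hB : ClusterCyclic B)
    (ε : List (Fin 3) → Fin 3 → ℝ) (hε : IsTropSigns B ε)
    (w : List (Fin 3)) (hw : ReducedSeq w) (hne : w ≠ []) :
    {p : Fin 3 × Fin 3 | p.1 ≠ p.2 ∧
      (0 < ε w p.1 * Bmat B w p.1 p.2 ∨ 0 < ε w p.2 * Bmat B w p.2 p.1)}.ncard = 4 := by
  obtain ⟨u, t, rfl⟩ : ∃ u t, w = u ++ [t] := by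
    rcases List.eq_nil_or_concat w with h | ⟨u, t, h⟩
    · exact absurd h hne
    · rw [List.concat_eq_append] at h
      exact ⟨u, t, h⟩
  obtain ⟨m, d, hm, -, -, -, -, -⟩ := inv_holds hB hε u t hw
  exact count_four (hB _ hw) (fun j => (hε _ hw j).1) hm
end
end

section
/- Let M be the free monoid on two generators S, T acting on the set E of 12 tuples (ε_1,ε_2,ε_3;k) with ε_j ∈ {±1}, k ∈ {1,2,3}, such that exactly one index j ≠ k has ε_j ≠ ε_k, where the actions are: S fixes the signs except negating ε_k and ε_s and swaps the roles k ↦ s (with s the unique index j ≠ k with ε_j ≠ ε_k), and T negates ε_t and sets the new distinguished index to t (with t the unique index j ≠ k with ε_j = ε_k), relabeling so that afterwards the new s equals the old k. Then the quotient monoid of M acting faithfully on E is a group isomorphic to the dihedral group D_6 of order 12; in particular S̄² = T̄⁶ = (S̄T̄)² = id. -/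
noncomputable section

/-- A sign state: a triple of signs (values in `{±1}` ⊆ ℤ) together with a distinguished
index `k`. -/
abbrev SignState := (Fin 3 → ℤ) × Fin 3

/-- A state is good if all entries are `±1` and exactly one of the two indices other than
the distinguished index `k` carries a sign different from that of `k`. -/
def goodState (e : SignState) : Prop :=
  (∀ j, e.1 j = 1 ∨ e.1 j = -1) ∧
  ((e.1 (e.2 + 1) = e.1 e.2) ↔ ¬ (e.1 (e.2 + 2) = e.1 e.2))

/-- The set `E` of the 12 good sign states. -/
def EState : Type := {e : SignState // goodState e}

/-- The index `s`: the unique index other than `k` whose sign differs from that of `k`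
(for a good state). -/
def sIdx (e : SignState) : Fin 3 :=
  if e.1 (e.2 + 1) = e.1 e.2 then e.2 + 2 else e.2 + 1

/-- The index `t`: the unique index other than `k` whose sign agrees with that of `k`
(for a good state). -/
def tIdx (e : SignState) : Fin 3 :=
  if e.1 (e.2 + 1) = e.1 e.2 then e.2 + 1 else e.2 + 2

/-- The raw `S`-move: negate `ε_k` and `ε_s`, and move the distinguished index to `s`. -/
def Sx (e : SignState) : SignState :=
  (fun j => if j = e.2 ∨ j = sIdx e then -e.1 j else e.1 j, sIdx e)

/-- The raw `T`-move: negate `ε_t` and move the distinguished index to `t`. -/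
def Tx (e : SignState) : SignState :=
  (fun j => if j = tIdx e then -e.1 j else e.1 j, tIdx e)

open Classical in
/-- The `S`-move as an endomorphism of the set of good states. -/
def SE : Function.End EState := fun e =>
  if h : goodState (Sx e.1) then ⟨Sx e.1, h⟩ else e

open Classical in
/-- The `T`-move as an endomorphism of the set of good states. -/
def TE : Function.End EState := fun e =>
  if h : goodState (Tx e.1) then ⟨Tx e.1, h⟩ else e


-- auxiliary lemmas

instance : DecidablePred goodState := fun e => by unfold goodState; infer_instance

lemma reduceCases (P : SignState → Prop)
    (h : ∀ a b c : ℤ, (a = 1 ∨ a = -1) → (b = 1 ∨ b = -1) → (c = 1 ∨ c = -1) →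
      ∀ k, P (![a, b, c], k)) :
    ∀ e : SignState, (∀ j, e.1 j = 1 ∨ e.1 j = -1) → P e := by
  rintro ⟨f, k⟩ hf
  have hfe : f = ![f 0, f 1, f 2] := by funext j; fin_cases j <;> rfl
  have := h (f 0) (f 1) (f 2) (hf 0) (hf 1) (hf 2) k
  rwa [← hfe] at this

lemma caseTac (P : SignState → Prop)
    (h : ∀ a b c : ℤ, (a = 1 ∨ a = -1) → (b = 1 ∨ b = -1) → (c = 1 ∨ c = -1) →
      ∀ k, goodState (![a, b, c], k) → P (![a, b, c], k)) :
    ∀ e : SignState, goodState e → P e := fun e he =>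
  reduceCases (fun x => goodState x → P x) h e he.1 he

lemma goodS : ∀ e : SignState, goodState e → goodState (Sx e) := by
  apply caseTac
  rintro a b c (rfl | rfl) (rfl | rfl) (rfl | rfl) <;> decide

lemma goodT : ∀ e : SignState, goodState e → goodState (Tx e) := by
  apply caseTac
  rintro a b c (rfl | rfl) (rfl | rfl) (rfl | rfl) <;> decide

lemma SxSx : ∀ e : SignState, goodState e → Sx (Sx e) = e := by
  apply caseTac
  rintro a b c (rfl | rfl) (rfl | rfl) (rfl | rfl) <;> decide

lemma Tx6 : ∀ e : SignState, goodState e → Tx^[6] e = e := by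
  apply caseTac
  rintro a b c (rfl | rfl) (rfl | rfl) (rfl | rfl) <;> decide

lemma STST : ∀ e : SignState, goodState e → Sx (Tx (Sx (Tx e))) = e := by
  apply caseTac
  rintro a b c (rfl | rfl) (rfl | rfl) (rfl | rfl) <;> decide

lemma SE_apply (e : EState) : (SE e).1 = Sx e.1 := by
  simp only [SE, dif_pos (goodS e.1 e.2)]; exact congrArg Subtype.val (dif_pos (goodS e.1 e.2))

lemma TE_apply (e : EState) : (TE e).1 = Tx e.1 := by
  simp only [TE, dif_pos (goodT e.1 e.2)]; exact congrArg Subtype.val (dif_pos (goodT e.1 e.2))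

lemma TE_pow_apply (n : ℕ) : ∀ e : EState,
    ((TE ^ n : Function.End EState) e).1 = Tx^[n] e.1 := by
  induction n with
  | zero => intro e; rfl
  | succ n ih =>
      intro e
      have h1 : (TE ^ (n + 1) : Function.End EState) e
          = (TE ^ n : Function.End EState) (TE e) := by rw [pow_succ]; rfl
      rw [h1, ih, TE_apply, Function.iterate_succ_apply]

lemma rel_SS : SE * SE = 1 := by
  funext e
  refine Subtype.ext ?_
  show (SE (SE e)).1 = e.1
  rw [SE_apply, SE_apply, SxSx e.1 e.2]

lemma rel_T6 : TE ^ 6 = 1 := by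
  funext e
  refine Subtype.ext ?_
  show ((TE ^ 6 : Function.End EState) e).1 = e.1
  rw [TE_pow_apply, Tx6 e.1 e.2]

lemma rel_STST : (SE * TE) * (SE * TE) = 1 := by
  funext e
  refine Subtype.ext ?_
  show (SE (TE (SE (TE e)))).1 = e.1
  rw [SE_apply, TE_apply, SE_apply, TE_apply, STST e.1 e.2]

lemma TE_pow_congr {a b : ℕ} (h : (a : ZMod 6) = (b : ZMod 6)) : TE ^ a = TE ^ b := by
  rw [pow_eq_pow_mod a rel_T6, pow_eq_pow_mod b rel_T6]
  have ha : a % 6 = (a : ZMod 6).val := (ZMod.val_natCast 6 a).symm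
  have hb : b % 6 = (b : ZMod 6).val := (ZMod.val_natCast 6 b).symm
  rw [ha, hb, h]

lemma SSleft (x : Function.End EState) : SE * (SE * x) = x := by
  rw [← mul_assoc, rel_SS, one_mul]

lemma conj_STS : SE * TE * SE = TE ^ 5 := by
  have h : SE * TE * SE * TE = 1 := by
    have := rel_STST; rwa [← mul_assoc] at this
  have h6 : TE * TE ^ 5 = 1 := by rw [← pow_succ']; exact rel_T6
  calc SE * TE * SE = SE * TE * SE * (TE * TE ^ 5) := by rw [h6, mul_one]
    _ = (SE * TE * SE * TE) * TE ^ 5 := by rw [← mul_assoc]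
    _ = TE ^ 5 := by rw [h, one_mul]

lemma conjPowSE (a : ℕ) : SE * TE ^ a * SE = TE ^ (5 * a) := by
  induction a with
  | zero => simpa using rel_SS
  | succ n ih =>
      have h1 : SE * TE ^ (n + 1) * SE = (SE * TE ^ n * SE) * (SE * TE * SE) := by
        simp only [pow_succ, mul_assoc, SSleft]
      rw [h1, ih, conj_STS, ← pow_add]
      exact TE_pow_congr (by push_cast; ring)

lemma TEpow_SE (a : ℕ) : TE ^ a * SE = SE * TE ^ (5 * a) := by
  calc TE ^ a * SE = SE * (SE * (TE ^ a * SE)) := (SSleft _).symm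
    _ = SE * (SE * TE ^ a * SE) := by rw [mul_assoc SE (TE ^ a) SE]
    _ = SE * TE ^ (5 * a) := by rw [conjPowSE]

def phi : DihedralGroup 6 →* Function.End EState where
  toFun x := match x with
    | .r i => TE ^ i.val
    | .sr i => SE * TE ^ i.val
  map_one' := by
    show TE ^ (0 : ZMod 6).val = 1
    simp [ZMod.val_zero]
  map_mul' x y := by
    rcases x with i | i <;> rcases y with j | j <;>
      simp only [DihedralGroup.r_mul_r, DihedralGroup.r_mul_sr, DihedralGroup.sr_mul_r,
        DihedralGroup.sr_mul_sr]
    · show TE ^ (i + j).val = TE ^ i.val * TE ^ j.val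
      rw [← pow_add]
      exact TE_pow_congr (by push_cast [ZMod.natCast_val, ZMod.cast_id]; ring)
    · show SE * TE ^ (j - i).val = TE ^ i.val * (SE * TE ^ j.val)
      rw [← mul_assoc, TEpow_SE, mul_assoc, ← pow_add]
      rw [TE_pow_congr (a := (j - i).val) (b := 5 * i.val + j.val) (by
        push_cast [ZMod.natCast_val, ZMod.cast_id]
        rw [show (5 : ZMod 6) = -1 by decide]
        ring)]
    · show SE * TE ^ (i + j).val = SE * TE ^ i.val * TE ^ j.val
      rw [mul_assoc, ← pow_add]
      rw [TE_pow_congr (a := (i + j).val) (b := i.val + j.val) (by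
        push_cast [ZMod.natCast_val, ZMod.cast_id]; ring)]
    · show TE ^ (j - i).val = SE * TE ^ i.val * (SE * TE ^ j.val)
      rw [← mul_assoc (SE * TE ^ i.val) SE (TE ^ j.val), conjPowSE, ← pow_add]
      rw [TE_pow_congr (a := (j - i).val) (b := 5 * i.val + j.val) (by
        push_cast [ZMod.natCast_val, ZMod.cast_id]
        rw [show (5 : ZMod 6) = -1 by decide]
        ring)]

def e0 : EState := ⟨(![1, 1, -1], 0), by decide⟩

def Gmap : DihedralGroup 6 → SignState := fun x => match x with
  | .r i => Tx^[i.val] e0.1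
  | .sr i => Sx (Tx^[i.val] e0.1)

lemma Gmap_inj : Function.Injective Gmap := by decide

lemma phi_eval (x : DihedralGroup 6) : (phi x e0).1 = Gmap x := by
  rcases x with i | i
  · exact TE_pow_apply i.val e0
  · show (SE ((TE ^ i.val : Function.End EState) e0)).1 = _
    rw [SE_apply, TE_pow_apply]
    rfl

lemma phi_inj : Function.Injective phi := by
  intro x y h
  apply Gmap_inj
  rw [← phi_eval, ← phi_eval, h]

lemma phi_range : MonoidHom.mrange phi = Submonoid.closure {SE, TE} := by
  apply le_antisymm
  · rintro _ ⟨x, rfl⟩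
    have hT : TE ∈ Submonoid.closure ({SE, TE} : Set (Function.End EState)) :=
      Submonoid.subset_closure (Set.mem_insert_of_mem _ rfl)
    have hS : SE ∈ Submonoid.closure ({SE, TE} : Set (Function.End EState)) :=
      Submonoid.subset_closure (Set.mem_insert _ _)
    rcases x with i | i
    · exact pow_mem hT _
    · exact mul_mem hS (pow_mem hT _)
  · rw [Submonoid.closure_le]
    rintro x (rfl | rfl)
    · exact ⟨.sr 0, by show SE * TE ^ (0 : ZMod 6).val = SE; simp [ZMod.val_zero]⟩
    · exact ⟨.r 1, by show TE ^ (1 : ZMod 6).val = TE; rw [show (1 : ZMod 6).val = 1 from rfl, pow_one]⟩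

/-- The quotient of the free monoid on `S, T` by the relation of acting identically on
`E` is (isomorphic to) the submonoid of `Function.End EState` generated by the two
moves.  This monoid is a group isomorphic to the dihedral group `D₆` of order 12, and
the relations `S̄² = T̄⁶ = (S̄T̄)² = id` hold. -/
theorem quotient_monoid_is_dihedral :
    Nonempty ((Submonoid.closure {SE, TE} : Submonoid (Function.End EState)) ≃*
      DihedralGroup 6) ∧
    SE * SE = 1 ∧ TE ^ 6 = 1 ∧ (SE * TE) * (SE * TE) = 1 := by
  refine ⟨?_, rel_SS, rel_T6, rel_STST⟩
  have e1 : DihedralGroup 6 ≃* MonoidHom.mrange phi :=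
    MulEquiv.ofBijective phi.mrangeRestrict
      ⟨fun a b hab => phi_inj (congrArg Subtype.val hab), phi.mrangeRestrict_surjective⟩
  exact ⟨(MulEquiv.submonoidCongr phi_range).symm.trans e1.symm⟩
end
end
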